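/- Let T = Q⁻¹UQ with U unitary on a complex Hilbert space and Q bounded positive invertible, and let φ : [0,2π] → ℝ be a bounded measurable function with 0 < c ≤ φ. Writing B = ∫₀^{2π} φ(λ) dE_λ^U for the spectral integral of U, the form h_φ(x,y) := ⟪Qx, B Q y⟫ is a T-invariant positive-definite Hermitian inner product, and h_φ(x,y) = h_T(C_φ x, y) where h_T(x,y) = ⟪Q²x,y⟫ and C_φ = Q⁻¹BQ commutes with T. -/

import Mathlib

open ContinuousLinearMap
local notation "⟪" x ", " y "⟫" => @inner ℂ _ _ x y

/-- Let `T = Q⁻¹UQ` with `U` unitary and `Q` bounded positive invertible, and let `B` be a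
bounded positive operator with `B ≥ c·I` (`c > 0`) commuting with `U` (playing the role of
the spectral integral `∫ φ(λ) dE_λ^U` of a function `φ ≥ c`). Then
`h_φ(x,y) := ⟪Qx, BQy⟫` is a `T`-invariant positive-definite Hermitian inner product, and
`h_φ(x,y) = h_T(C_φ x, y)` where `h_T(x,y) = ⟪Q²x,y⟫` and `C_φ = Q⁻¹BQ` commutes with `T`. -/
theorem spectral_family_of_invariant_metrics
    {ℍ : Type*} [NormedAddCommGroup ℍ] [InnerProductSpace ℂ ℍ] [CompleteSpace ℍ]
    (U Q : ℍ ≃L[ℂ] ℍ) (B : ℍ →L[ℂ] ℍ) (c : ℝ)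
    (hU : ∀ x y : ℍ, ⟪U x, U y⟫ = ⟪x, y⟫)
    (hQ : (Q : ℍ →L[ℂ] ℍ).IsPositive)
    (hc : 0 < c)
    (hBpos : B.IsPositive)
    (hBlb : (B - (c : ℂ) • (1 : ℍ →L[ℂ] ℍ)).IsPositive)
    (hBU : B.comp (U : ℍ →L[ℂ] ℍ) = (U : ℍ →L[ℂ] ℍ).comp B)
    (T : ℍ ≃L[ℂ] ℍ) (hT : T = Q⁻¹ * U * Q)
    (hφ : ℍ → ℍ → ℂ) (hhφ : hφ = fun x y => ⟪Q x, B (Q y)⟫)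
    (Cφ : ℍ →L[ℂ] ℍ) (hCφ : Cφ = (Q⁻¹ : ℍ ≃L[ℂ] ℍ) ∘L B ∘L (Q : ℍ →L[ℂ] ℍ)) :
    -- Hermitian symmetry
    (∀ x y : ℍ, (starRingEnd ℂ) (hφ x y) = hφ y x) ∧
    -- positive-definiteness
    (∀ x : ℍ, x ≠ 0 → 0 < (hφ x x).re ∧ (hφ x x).im = 0) ∧
    -- T-invariance
    (∀ x y : ℍ, hφ (T x) (T y) = hφ x y) ∧
    -- h_φ(x,y) = h_T(C_φ x, y) with h_T(x,y) = ⟪Q²x, y⟫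
    (∀ x y : ℍ, hφ x y = ⟪Q (Q (Cφ x)), y⟫) ∧
    -- C_φ commutes with T
    Cφ ∘L (T : ℍ →L[ℂ] ℍ) = (T : ℍ →L[ℂ] ℍ) ∘L Cφ := by
  have hBsym : ∀ x y : ℍ, ⟪B x, y⟫ = ⟪x, B y⟫ := fun x y => hBpos.1 x y
  have hQsym : ∀ x y : ℍ, ⟪Q x, y⟫ = ⟪x, Q y⟫ := fun x y => hQ.1 x y
  have hBUapp : ∀ x : ℍ, B (U x) = U (B x) := fun x => congrFun (congrArg DFunLike.coe hBU) x
  have hQinv : ∀ v : ℍ, Q ((Q⁻¹ : ℍ ≃L[ℂ] ℍ) v) = v := fun v => Q.apply_symm_apply v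
  subst hhφ hCφ hT
  have hsymm : ∀ x y : ℍ, (starRingEnd ℂ) ⟪Q x, B (Q y)⟫ = ⟪Q y, B (Q x)⟫ := by
    intro x y
    rw [← inner_conj_symm, starRingEnd_self_apply, hBsym]
  refine ⟨hsymm, ?_, ?_, ?_, ?_⟩
  · intro x hx
    have hQx : Q x ≠ 0 := fun h => hx (Q.injective (by simpa using h))
    have h1 := hBlb.2 (Q x)
    have h2 : (⟪Q x, B (Q x)⟫).im = 0 := Complex.conj_eq_iff_im.mp (hsymm x x)
    have hre : (⟪Q x, B (Q x)⟫).re = (⟪B (Q x), Q x⟫).re := by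
      rw [← inner_conj_symm (Q x) (B (Q x)), Complex.conj_re]
    have h3 : RCLike.re ⟪(B - (c : ℂ) • (1 : ℍ →L[ℂ] ℍ)) (Q x), Q x⟫ =
        (⟪B (Q x), Q x⟫).re - c * ‖Q x‖ ^ 2 := by
      rw [ContinuousLinearMap.sub_apply, ContinuousLinearMap.smul_apply, ContinuousLinearMap.one_apply, inner_sub_left, inner_smul_left,
        inner_self_eq_norm_sq_to_K, map_sub, Complex.conj_ofReal]
      simp [RCLike.re_to_complex, ← Complex.ofReal_pow]
    rw [reApplyInnerSelf_apply, h3] at h1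
    have h4 : 0 < c * ‖Q x‖ ^ 2 := mul_pos hc (pow_pos (norm_pos_iff.mpr hQx) 2)
    exact ⟨by rw [hre]; linarith, h2⟩
  · intro x y
    have hQT : ∀ z : ℍ, Q ((Q⁻¹ * U * Q) z) = U (Q z) := fun z => hQinv (U (Q z))
    show ⟪Q ((Q⁻¹ * U * Q) x), B (Q ((Q⁻¹ * U * Q) y))⟫ = ⟪Q x, B (Q y)⟫
    rw [hQT, hQT, hBUapp, hU]
  · intro x y
    show ⟪Q x, B (Q y)⟫ = ⟪Q (Q ((Q⁻¹ : ℍ ≃L[ℂ] ℍ) (B (Q x)))), y⟫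
    calc ⟪Q x, B (Q y)⟫ = ⟪B (Q x), Q y⟫ := (hBsym _ _).symm
      _ = ⟪Q (B (Q x)), y⟫ := (hQsym _ _).symm
      _ = ⟪Q (Q ((Q⁻¹ : ℍ ≃L[ℂ] ℍ) (B (Q x)))), y⟫ := by rw [hQinv]
  · ext z
    show (Q⁻¹ : ℍ ≃L[ℂ] ℍ) (B (Q ((Q⁻¹ * U * Q) z))) =
      (Q⁻¹ : ℍ ≃L[ℂ] ℍ) (U (Q ((Q⁻¹ : ℍ ≃L[ℂ] ℍ) (B (Q z)))))
    rw [show Q ((Q⁻¹ * U * Q) z) = U (Q z) from hQinv (U (Q z)), hBUapp, hQinv]
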